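/- arXiv:1904.09810 — 2 statements merged into one kernel-verified Lean document; each statement's English description precedes it below -/
import Mathlib

section
/- If X is a set, then the lifting L(X) = Σ (P : Ω), (P → X), ordered by l ⊑ m := (isdefined(l) → l = m), is a dcpo with least element ⊥ = (∅, from-∅); the least upper bound of a directed family u : I → L(X) has definedness proposition ∥Σ (i : I), isdefined(u_i)∥, with value function obtained by factoring (i, d) ↦ value(u_i)(d) through the truncation, using that this map is weakly constant by directedness. -/
/-- The lifting of a type: pairs of a proposition and a value function. -/
def Lift (X : Type) : Type := Σ P : Prop, (P → X)

/-- The least element of the lifting. -/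
def liftBot (X : Type) : Lift X := ⟨False, fun h => h.elim⟩

/-- The unit of the lifting monad. -/
def liftEta {X : Type} (x : X) : Lift X := ⟨True, fun _ => x⟩

/-- The order on the lifting: `l ⊑ m` iff `l` defined implies `l = m`. -/
def LiftLE {X : Type} (l m : Lift X) : Prop := l.1 → l = m

/-- Kleisli extension of `f : X → Lift Y`. -/
noncomputable def kext {X Y : Type} (f : X → Lift Y) (l : Lift X) : Lift Y :=
  ⟨∃ p : l.1, (f (l.2 p)).1, fun h => (f (l.2 h.choose)).2 h.choose_spec⟩

/-- A type is a set if its identity types are propositions. -/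
def IsSet (X : Type) : Prop := ∀ (x y : X) (p q : x = y), p = q

/-- Directedness of a family in the lifting, w.r.t. `LiftLE`. -/
def LDir {X I : Type} (u : I → Lift X) : Prop :=
  Nonempty I ∧ ∀ i j : I, ∃ k : I, LiftLE (u i) (u k) ∧ LiftLE (u j) (u k)

/-- Least upper bounds in the lifting, w.r.t. `LiftLE`. -/
def LIsLUB {X I : Type} (u : I → Lift X) (d : Lift X) : Prop :=
  (∀ i, LiftLE (u i) d) ∧ ∀ e : Lift X, (∀ i, LiftLE (u i) e) → LiftLE d e

private theorem lift_val_eq {X : Type} {l m : Lift X} (e : l = m) (h : l.1) (h' : m.1) :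
    l.2 h = m.2 h' := by
  subst e; exact congrArg l.2 (proof_irrel h h')

private theorem lift_ext {X : Type} {l m : Lift X} (hP : l.1 = m.1)
    (hv : ∀ (h : l.1) (h' : m.1), l.2 h = m.2 h') : l = m := by
  obtain ⟨P, f⟩ := l; obtain ⟨Q, g⟩ := m
  dsimp at hP; subst hP
  exact congrArg (Sigma.mk P) (funext fun h => hv h h)

/-- If `X` is a set, the lifting of `X` with the order `LiftLE` is a dcpo with
least element `liftBot`; the least upper bound of a directed family `u` has
definedness proposition `∃ i, isdefined (u i)` and value function given by the
values of the members of the family. -/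
theorem lift_dcpo_with_bot {X : Type} (hX : IsSet X) :
    (∀ l : Lift X, LiftLE l l) ∧
    (∀ l m : Lift X, LiftLE l m → LiftLE m l → l = m) ∧
    (∀ l m n : Lift X, LiftLE l m → LiftLE m n → LiftLE l n) ∧
    (∀ l : Lift X, LiftLE (liftBot X) l) ∧
    (∀ {I : Type} (u : I → Lift X), LDir u →
      ∃ d : Lift X, d.1 = (∃ i : I, (u i).1) ∧
        (∀ (i : I) (h : (u i).1) (p : d.1), d.2 p = (u i).2 h) ∧
        LIsLUB u d) := by
  refine ⟨fun l _ => rfl, fun l m hlm hml => ?_, fun l m n hlm hmn h => ?_,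
    fun l h => h.elim, fun {I} u hu => ?_⟩
  · by_cases hl : l.1
    · exact hlm hl
    · by_cases hm : m.1
      · exact (hml hm).symm
      · exact lift_ext (propext ⟨fun h => absurd h hl, fun h => absurd h hm⟩)
          (fun h _ => absurd h hl)
  · exact (hlm h).trans (hmn (hlm h ▸ h))
  · obtain ⟨hne, hdir⟩ := hu
    have key : ∀ (i : I) (h : (u i).1) (j : I) (h' : (u j).1), (u i).2 h = (u j).2 h' := by
      intro i h j h'
      obtain ⟨k, hik, hjk⟩ := hdir i j
      exact (lift_val_eq (hik h) h (hik h ▸ h)).trans (lift_val_eq (hjk h') h' (hjk h' ▸ h')).symm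
    refine ⟨⟨∃ i, (u i).1, fun h => (u h.choose).2 h.choose_spec⟩, rfl, ?_, ?_, ?_⟩
    · intro i h p
      exact key p.choose p.choose_spec i h
    · intro i h
      refine lift_ext (propext ⟨fun _ => ⟨i, h⟩, fun _ => h⟩) ?_
      intro h1 h2
      exact key i h1 h2.choose h2.choose_spec
    · intro e he p
      have hpe : u p.choose = e := he p.choose p.choose_spec
      refine lift_ext (propext ⟨fun _ => hpe ▸ p.choose_spec, fun _ => p⟩) ?_
      intro h1 h2
      exact (key h1.choose h1.choose_spec p.choose p.choose_spec).trans
        (lift_val_eq hpe p.choose_spec h2)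
end

section
/- The lifting of a set X is the free subsingleton-complete pointed poset on X: for every subsingleton-complete poset D with least element and every function f : X → D, there is a unique monotone map g : L(X) → D preserving the least element and proposition-indexed suprema such that g ∘ η = f; explicitly g(P, φ) = ⨆_{p : P} f(φ(p)). -/
/-- The properties characterising the extension of `f : X → D` along the unit:
monotone, strict, preserving proposition-indexed suprema, and `g ∘ η = f`. -/
def IsFreeExt {X D : Type} [PartialOrder D] [OrderBot D]
    (f : X → D) (g : Lift X → D) : Prop :=
  (∀ l m : Lift X, LiftLE l m → g l ≤ g m) ∧
  g (liftBot X) = ⊥ ∧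
  (∀ (P : Prop) (u : P → Lift X) (v : Lift X),
    (∀ p : P, LiftLE (u p) v) →
    (∀ e : Lift X, (∀ p : P, LiftLE (u p) e) → LiftLE v e) →
    IsLUB (Set.range fun p : P => g (u p)) (g v)) ∧
  (∀ x : X, g (liftEta x) = f x)

lemma lift_eq_eta {X : Type} (l : Lift X) (p : l.1) : liftEta (l.2 p) = l := by
  obtain ⟨P, φ⟩ := l
  have hP : True = P := propext ⟨fun _ => p, fun _ => trivial⟩
  subst hP
  exact congrArg (Sigma.mk True) (funext fun t => rfl)

lemma lift_key_ub {X : Type} (l : Lift X) :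
    ∀ p : l.1, LiftLE (liftEta (l.2 p)) l := fun p _ => lift_eq_eta l p

lemma lift_key_lub {X : Type} (l : Lift X) :
    ∀ e : Lift X, (∀ p : l.1, LiftLE (liftEta (l.2 p)) e) → LiftLE l e := by
  intro e he q
  rw [← lift_eq_eta l q]
  exact he q trivial

lemma ext_is_lub {X D : Type} [PartialOrder D] [OrderBot D] (f : X → D)
    (g : Lift X → D) (hg : IsFreeExt f g) (l : Lift X) :
    IsLUB (Set.range fun p : l.1 => f (l.2 p)) (g l) := by
  obtain ⟨hmono, hbot, hsup, heta⟩ := hg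
  have h := hsup l.1 (fun p => liftEta (l.2 p)) l (lift_key_ub l) (lift_key_lub l)
  have he : (fun p : l.1 => g (liftEta (l.2 p))) = fun p => f (l.2 p) :=
    funext fun p => heta _
  rwa [he] at h

/-- The lifting of a set `X` is the free subsingleton-complete pointed poset
on `X`: any `f : X → D` into a subsingleton-complete pointed poset extends
uniquely to a monotone map preserving `⊥` and proposition-indexed suprema,
explicitly given by `g (P, φ) = ⨆_{p : P} f (φ p)`. -/
theorem lift_free_subsingleton_complete {X D : Type} [PartialOrder D] [OrderBot D]
    (hX : IsSet X)
    (hD : ∀ (P : Prop) (u : P → D), ∃ s : D, IsLUB (Set.range u) s)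
    (f : X → D) :
    (∃! g : Lift X → D, IsFreeExt f g) ∧
    (∀ g : Lift X → D, IsFreeExt f g →
      ∀ l : Lift X, IsLUB (Set.range fun p : l.1 => f (l.2 p)) (g l)) := by
  classical
  set g0 : Lift X → D := fun l => (hD l.1 (fun p => f (l.2 p))).choose with hg0
  have hspec : ∀ l : Lift X, IsLUB (Set.range fun p : l.1 => f (l.2 p)) (g0 l) :=
    fun l => (hD l.1 (fun p => f (l.2 p))).choose_spec
  have hmono : ∀ l m : Lift X, LiftLE l m → g0 l ≤ g0 m := by
    intro l m h
    refine (hspec l).2 ?_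
    rintro x ⟨p, rfl⟩
    have hl : l = m := h p
    subst hl
    exact (hspec l).1 ⟨p, rfl⟩
  have hfree : IsFreeExt f g0 := by
    refine ⟨hmono, ?_, ?_, ?_⟩
    · refine le_antisymm ((hspec (liftBot X)).2 ?_) bot_le
      rintro x ⟨p, rfl⟩
      exact p.elim
    · intro P u v hub hlub
      constructor
      · rintro x ⟨p, rfl⟩
        exact hmono _ _ (hub p)
      · intro d hd
        refine (hspec v).2 ?_
        rintro x ⟨q, rfl⟩
        have hex : ∃ p : P, (u p).1 := by
          by_contra hne
          have hb : LiftLE v (liftBot X) := by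
            refine hlub _ (fun p hp => absurd ⟨p, hp⟩ hne)
          have hv : v = liftBot X := hb q
          rw [hv] at q
          exact q.elim
        obtain ⟨p, hp⟩ := hex
        have hv : u p = v := hub p hp
        subst hv
        calc f ((u p).2 q) ≤ g0 (u p) := (hspec (u p)).1 ⟨q, rfl⟩
          _ ≤ d := hd ⟨p, rfl⟩
    · intro x
      have h := hspec (liftEta x)
      have hr : (Set.range fun p : (liftEta x).1 => f ((liftEta x).2 p)) = {f x} := by
        ext y
        constructor
        · rintro ⟨p, rfl⟩; rfl
        · rintro rfl; exact ⟨trivial, rfl⟩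
      rw [hr] at h
      exact h.unique isLUB_singleton
  constructor
  · refine ⟨g0, hfree, ?_⟩
    intro g' hg'
    funext l
    exact (ext_is_lub f g' hg' l).unique (hspec l)
  · exact fun g hg l => ext_is_lub f g hg l
end
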